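/- Let 1 ≤ p₁ ≤ p₂ < ∞, let φ₁ ∈ G_{p₁} and φ₂ ∈ G_{p₂}. Suppose there exists C' > 0 such that ‖x‖_{ℓ^{p₁}_{φ₁}} ≤ C' ‖x‖_{ℓ^{p₂}_{φ₂}} for every x ∈ ℓ^{p₂}_{φ₂}. Then there exists C > 0 such that φ₂(2N+1) ≤ C φ₁(2N+1) for every N ∈ ℕ. -/

import Mathlib

open scoped ENNReal NNReal BigOperators

/-- The discrete "ball" `S_{m,N} = {m-N, …, m+N}` as a finite set of integers. -/
noncomputable def S (m : ℤ) (N : ℕ) : Finset ℤ := Finset.Icc (m - N) (m + N)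

/-- The generalized discrete Morrey norm `‖x‖_{ℓ^p_φ}`. -/
noncomputable def gMorreyNorm (p : ℝ) (φ : ℕ → ℝ) (x : ℤ → ℂ) : ℝ≥0∞ :=
  ⨆ (m : ℤ) (N : ℕ),
    (ENNReal.ofReal (φ (2 * N + 1)))⁻¹ *
      ((2 * (N : ℝ≥0∞) + 1)⁻¹ * ∑ k ∈ S m N, (‖x k‖₊ : ℝ≥0∞) ^ p) ^ (1 / p)

lemma S_card (m : ℤ) (N : ℕ) : (S m N).card = 2 * N + 1 := by
  simp only [S, Int.card_Icc]; omega

noncomputable def testx (N₀ : ℕ) : ℤ → ℂ := fun k => if k ∈ S 0 N₀ then 1 else 0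

lemma sum_test (p : ℝ) (hp : 0 < p) (N₀ : ℕ) (m : ℤ) (N : ℕ) :
    ∑ k ∈ S m N, (‖testx N₀ k‖₊ : ℝ≥0∞) ^ p = ((S m N ∩ S 0 N₀).card : ℝ≥0∞) := by
  have h : ∀ k ∈ S m N, (‖testx N₀ k‖₊ : ℝ≥0∞) ^ p = if k ∈ S 0 N₀ then 1 else 0 := by
    intro k _
    by_cases h : k ∈ S 0 N₀ <;> simp [testx, h, ENNReal.zero_rpow_of_pos hp]
  rw [Finset.sum_congr rfl h, Finset.sum_ite_mem, Finset.sum_const, nsmul_eq_mul, mul_one]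

lemma term_eq (p : ℝ) (hp : 0 < p) (φ : ℕ → ℝ) (N₀ : ℕ) (m : ℤ) (N : ℕ)
    (hφ : 0 < φ (2 * N + 1)) :
    (ENNReal.ofReal (φ (2 * N + 1)))⁻¹ *
      ((2 * (N : ℝ≥0∞) + 1)⁻¹ * ∑ k ∈ S m N, (‖testx N₀ k‖₊ : ℝ≥0∞) ^ p) ^ (1 / p)
    = ENNReal.ofReal ((φ (2 * N + 1))⁻¹ *
        ((2 * (N : ℝ) + 1)⁻¹ * ((S m N ∩ S 0 N₀).card : ℝ)) ^ (1 / p)) := by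
  have h2N : (2 * (N : ℝ≥0∞) + 1) = ENNReal.ofReal (2 * (N : ℝ) + 1) := by
    rw [show (2 * (N : ℝ≥0∞) + 1) = ((2 * N + 1 : ℕ) : ℝ≥0∞) by push_cast; ring,
      ← ENNReal.ofReal_natCast]
    congr 1; push_cast; ring
  have hcard : ((S m N ∩ S 0 N₀).card : ℝ≥0∞)
      = ENNReal.ofReal ((S m N ∩ S 0 N₀).card : ℝ) := by
    rw [← ENNReal.ofReal_natCast]
  have h2pos : (0:ℝ) < 2 * (N : ℝ) + 1 := by positivity
  rw [sum_test p hp, hcard, h2N, ← ENNReal.ofReal_inv_of_pos h2pos,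
    ← ENNReal.ofReal_mul (by positivity),
    ENNReal.ofReal_rpow_of_nonneg (by positivity) (by positivity),
    ← ENNReal.ofReal_inv_of_pos hφ, ← ENNReal.ofReal_mul (by positivity)]

lemma card_inter_le_left (m : ℤ) (N N₀ : ℕ) :
    ((S m N ∩ S 0 N₀).card : ℝ) ≤ 2 * N + 1 := by
  have := Finset.card_le_card (Finset.inter_subset_left (s₁ := S m N) (s₂ := S 0 N₀))
  rw [S_card] at this; exact_mod_cast this

lemma card_inter_le_right (m : ℤ) (N N₀ : ℕ) :
    ((S m N ∩ S 0 N₀).card : ℝ) ≤ 2 * N₀ + 1 := by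
  have := Finset.card_le_card (Finset.inter_subset_right (s₁ := S m N) (s₂ := S 0 N₀))
  rw [S_card] at this; exact_mod_cast this

lemma real_upper (p : ℝ) (hp : 0 < p) (φ : ℕ → ℝ) (hφpos : ∀ N : ℕ, 0 < φ (2 * N + 1))
    (c C : ℝ) (hc : 0 < c) (hC : 0 < C)
    (hdec : ∀ M N : ℕ, M ≤ N → c * φ (2 * N + 1) ≤ φ (2 * M + 1))
    (hinc : ∀ M N : ℕ, M ≤ N →
      (2 * (M : ℝ) + 1) ^ (1 / p) * φ (2 * M + 1) ≤
        C * ((2 * (N : ℝ) + 1) ^ (1 / p) * φ (2 * N + 1)))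
    (N₀ : ℕ) (m : ℤ) (N : ℕ) :
    (φ (2 * N + 1))⁻¹ * ((2 * (N : ℝ) + 1)⁻¹ * ((S m N ∩ S 0 N₀).card : ℝ)) ^ (1 / p)
      ≤ max C c⁻¹ * (φ (2 * N₀ + 1))⁻¹ := by
  have hφN := hφpos N
  have hφ₀ := hφpos N₀
  have h2N : (0:ℝ) < 2 * (N:ℝ) + 1 := by positivity
  have hcard0 : (0:ℝ) ≤ ((S m N ∩ S 0 N₀).card : ℝ) := by positivity
  have h1p : (0:ℝ) ≤ 1 / p := by positivity
  rcases le_total N N₀ with hle | hle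
  · -- N ≤ N₀ : inner average ≤ 1
    have hr1 : (2 * (N : ℝ) + 1)⁻¹ * ((S m N ∩ S 0 N₀).card : ℝ) ≤ 1 := by
      rw [inv_mul_le_iff₀ h2N, mul_one]
      exact card_inter_le_left m N N₀
    have hrpow : ((2 * (N : ℝ) + 1)⁻¹ * ((S m N ∩ S 0 N₀).card : ℝ)) ^ (1 / p) ≤ 1 :=
      Real.rpow_le_one (by positivity) hr1 h1p
    calc (φ (2 * N + 1))⁻¹ * ((2 * (N : ℝ) + 1)⁻¹ * ((S m N ∩ S 0 N₀).card : ℝ)) ^ (1 / p)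
        ≤ (φ (2 * N + 1))⁻¹ * 1 := by
          exact mul_le_mul_of_nonneg_left hrpow (by positivity)
      _ = (φ (2 * N + 1))⁻¹ := mul_one _
      _ ≤ (c * φ (2 * N₀ + 1))⁻¹ := by
          apply inv_anti₀ (by positivity) (hdec N N₀ hle)
      _ = c⁻¹ * (φ (2 * N₀ + 1))⁻¹ := by rw [mul_inv]
      _ ≤ max C c⁻¹ * (φ (2 * N₀ + 1))⁻¹ := by
          exact mul_le_mul_of_nonneg_right (le_max_right _ _) (by positivity)
  · -- N₀ ≤ N : card ≤ 2N₀+1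
    have h2N₀ : (0:ℝ) < 2 * (N₀:ℝ) + 1 := by positivity
    set a := (2 * (N₀ : ℝ) + 1) ^ (1 / p) with ha
    set b := (2 * (N : ℝ) + 1) ^ (1 / p) with hb
    have hapos : 0 < a := Real.rpow_pos_of_pos h2N₀ _
    have hbpos : 0 < b := Real.rpow_pos_of_pos h2N _
    have key := hinc N₀ N hle
    have hrr : ((2 * (N : ℝ) + 1)⁻¹ * ((S m N ∩ S 0 N₀).card : ℝ)) ^ (1 / p)
        ≤ a / b := by
      rw [ha, hb, ← Real.div_rpow (by positivity) h2N.le]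
      apply Real.rpow_le_rpow (by positivity) _ h1p
      rw [inv_mul_le_iff₀ h2N, mul_comm, div_mul_cancel₀ _ h2N.ne']
      exact card_inter_le_right m N N₀
    calc (φ (2 * N + 1))⁻¹ * ((2 * (N : ℝ) + 1)⁻¹ * ((S m N ∩ S 0 N₀).card : ℝ)) ^ (1 / p)
        ≤ (φ (2 * N + 1))⁻¹ * (a / b) := by
          exact mul_le_mul_of_nonneg_left hrr (by positivity)
      _ = (a * φ (2 * N₀ + 1)) * ((φ (2 * N₀ + 1))⁻¹ * (φ (2 * N + 1))⁻¹ * b⁻¹) := by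
          field_simp
      _ ≤ (C * (b * φ (2 * N + 1))) * ((φ (2 * N₀ + 1))⁻¹ * (φ (2 * N + 1))⁻¹ * b⁻¹) := by
          exact mul_le_mul_of_nonneg_right key (by positivity)
      _ = C * (φ (2 * N₀ + 1))⁻¹ := by field_simp
      _ ≤ max C c⁻¹ * (φ (2 * N₀ + 1))⁻¹ := by
          exact mul_le_mul_of_nonneg_right (le_max_left _ _) (by positivity)

theorem stmt13 (p₁ p₂ : ℝ) (hp₁ : 1 ≤ p₁) (hp : p₁ ≤ p₂)
    (φ₁ φ₂ : ℕ → ℝ)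
    (hφ₁pos : ∀ N : ℕ, 0 < φ₁ (2 * N + 1)) (hφ₂pos : ∀ N : ℕ, 0 < φ₂ (2 * N + 1))
    (hdec₁ : ∃ C : ℝ, 0 < C ∧ ∀ M N : ℕ, M ≤ N → C * φ₁ (2 * N + 1) ≤ φ₁ (2 * M + 1))
    (hinc₁ : ∃ C : ℝ, 0 < C ∧ ∀ M N : ℕ, M ≤ N →
      (2 * (M : ℝ) + 1) ^ (1 / p₁) * φ₁ (2 * M + 1) ≤
        C * ((2 * (N : ℝ) + 1) ^ (1 / p₁) * φ₁ (2 * N + 1)))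
    (hdec₂ : ∃ C : ℝ, 0 < C ∧ ∀ M N : ℕ, M ≤ N → C * φ₂ (2 * N + 1) ≤ φ₂ (2 * M + 1))
    (hinc₂ : ∃ C : ℝ, 0 < C ∧ ∀ M N : ℕ, M ≤ N →
      (2 * (M : ℝ) + 1) ^ (1 / p₂) * φ₂ (2 * M + 1) ≤
        C * ((2 * (N : ℝ) + 1) ^ (1 / p₂) * φ₂ (2 * N + 1)))
    (C' : ℝ) (hC' : 0 < C')
    (hnorm : ∀ x : ℤ → ℂ, gMorreyNorm p₂ φ₂ x < ⊤ →
      gMorreyNorm p₁ φ₁ x ≤ ENNReal.ofReal C' * gMorreyNorm p₂ φ₂ x) :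
    ∃ C : ℝ, 0 < C ∧ ∀ N : ℕ, φ₂ (2 * N + 1) ≤ C * φ₁ (2 * N + 1) := by
  
  obtain ⟨c₂, hc₂, hdec₂'⟩ := hdec₂
  obtain ⟨C₂, hC₂, hinc₂'⟩ := hinc₂
  have hp₂pos : (0:ℝ) < p₂ := lt_of_lt_of_le one_pos (hp₁.trans hp)
  have hp₁pos : (0:ℝ) < p₁ := lt_of_lt_of_le one_pos hp₁
  set D : ℝ := max C₂ c₂⁻¹ with hD
  have hDpos : 0 < D := lt_of_lt_of_le hC₂ (le_max_left _ _)
  refine ⟨C' * D, by positivity, fun N₀ => ?_⟩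
  -- upper bound on the p₂-norm of the test function
  have hupper : gMorreyNorm p₂ φ₂ (testx N₀) ≤
      ENNReal.ofReal (D * (φ₂ (2 * N₀ + 1))⁻¹) := by
    apply iSup_le; intro m; apply iSup_le; intro N
    rw [term_eq p₂ hp₂pos φ₂ N₀ m N (hφ₂pos N)]
    exact ENNReal.ofReal_le_ofReal
      (real_upper p₂ hp₂pos φ₂ hφ₂pos c₂ C₂ hc₂ hC₂ hdec₂' hinc₂' N₀ m N)
  have hfin : gMorreyNorm p₂ φ₂ (testx N₀) < ⊤ :=
    lt_of_le_of_lt hupper ENNReal.ofReal_lt_top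
  -- lower bound on the p₁-norm of the test function
  have hlower : ENNReal.ofReal ((φ₁ (2 * N₀ + 1))⁻¹) ≤ gMorreyNorm p₁ φ₁ (testx N₀) := by
    apply le_iSup_of_le (0 : ℤ); apply le_iSup_of_le N₀
    rw [term_eq p₁ hp₁pos φ₁ N₀ 0 N₀ (hφ₁pos N₀)]
    apply ENNReal.ofReal_le_ofReal
    rw [Finset.inter_self, S_card]
    have h2N₀ : (0:ℝ) < 2 * (N₀:ℝ) + 1 := by positivity
    rw [show ((2 * N₀ + 1 : ℕ) : ℝ) = 2 * (N₀:ℝ) + 1 by push_cast; ring,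
      inv_mul_cancel₀ h2N₀.ne', Real.one_rpow, mul_one]
  have hchain := (hlower.trans (hnorm (testx N₀) hfin)).trans
    (mul_le_mul_right hupper (ENNReal.ofReal C'))
  rw [← ENNReal.ofReal_mul hC'.le] at hchain
  have hreal : (φ₁ (2 * N₀ + 1))⁻¹ ≤ C' * (D * (φ₂ (2 * N₀ + 1))⁻¹) :=
    (ENNReal.ofReal_le_ofReal_iff (by have := hφ₂pos N₀; positivity)).mp hchain
  have hφ₁ := hφ₁pos N₀
  have hφ₂ := hφ₂pos N₀
  calc φ₂ (2 * N₀ + 1) = (φ₁ (2 * N₀ + 1))⁻¹ * (φ₁ (2 * N₀ + 1) * φ₂ (2 * N₀ + 1)) := by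
        field_simp
    _ ≤ (C' * (D * (φ₂ (2 * N₀ + 1))⁻¹)) * (φ₁ (2 * N₀ + 1) * φ₂ (2 * N₀ + 1)) :=
        mul_le_mul_of_nonneg_right hreal (by positivity)
    _ = C' * D * φ₁ (2 * N₀ + 1) := by field_simp
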